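/- arXiv:1208.3533 — 8 statements merged into one kernel-verified Lean document; each statement's English description precedes it below -/
import Mathlib

section
/- Let (X, d) be a metric space, P a finite subset of X, r ≥ 0, and B a positive integer such that for every p ∈ P, every r-independent subset of N_r(p) has at most B elements. Then for every r-independent subset S of P and every subset S* of P satisfying the r-coverage condition on P, it holds that |S| ≤ B · |S*|. In particular, any r-DisC diverse subset of P is at most B times larger than any minimum r-DisC diverse subset of P. -/
/-- In a metric space, if every object `p ∈ P` has at most `B`
pairwise `r`-independent neighbors (points of `P` other than `p` at distance at
most `r` from `p`), then any `r`-independent subset `S` of `P` is at most `B`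
times larger than any subset `S*` of `P` satisfying the `r`-coverage condition.
In particular, any `r`-DisC diverse subset is at most `B` times larger than any
minimum `r`-DisC diverse subset. -/
theorem disc_size_bound {X : Type*} [MetricSpace X] (P : Finset X) (r : ℝ) (hr : 0 ≤ r)
    (B : ℕ) (hB : 0 < B)
    (hBound : ∀ p ∈ P, ∀ A : Finset X,
      (∀ a ∈ A, a ∈ P ∧ a ≠ p ∧ dist p a ≤ r) →
      (∀ a ∈ A, ∀ b ∈ A, a ≠ b → dist a b > r) →
      A.card ≤ B)
    (S : Finset X) (hSP : S ⊆ P)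
    (hSind : ∀ a ∈ S, ∀ b ∈ S, a ≠ b → dist a b > r)
    (Sstar : Finset X) (hSstarP : Sstar ⊆ P)
    (hcov : ∀ p ∈ P, p ∈ Sstar ∨ ∃ q ∈ Sstar, dist p q ≤ r) :
    S.card ≤ B * Sstar.card := by
  classical
  have hchoice : ∀ s ∈ S, ∃ q ∈ Sstar, dist s q ≤ r := by
    intro s hs
    rcases hcov s (hSP hs) with h | h
    · exact ⟨s, h, by simp [hr]⟩
    · exact h
  choose f hf hfd using hchoice
  set g : X → X := fun s => if h : s ∈ S then f s h else s with hg
  apply Finset.card_le_mul_card_image_of_maps_to (f := g)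
  · intro s hs
    simp only [hg, dif_pos hs]
    exact hf s hs
  · intro q hq
    by_cases hqS : q ∈ S.filter fun a => g a = q
    · have : (S.filter fun a => g a = q) = {q} := by
        apply Finset.eq_singleton_iff_unique_mem.mpr
        refine ⟨hqS, ?_⟩
        intro s hs
        simp only [Finset.mem_filter] at hs hqS
        by_contra hne
        have h1 := hSind s hs.1 q hqS.1 hne
        have h2 : dist s q ≤ r := by
          have := hfd s hs.1
          rw [show f s hs.1 = g s from (dif_pos hs.1).symm, hs.2] at this
          exact this
        linarith
      rw [this, Finset.card_singleton]; exact hB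
    · apply hBound q (hSstarP hq)
      · intro a ha
        simp only [Finset.mem_filter] at ha
        refine ⟨hSP ha.1, ?_, ?_⟩
        · rintro rfl; exact hqS (Finset.mem_filter.mpr ha)
        · rw [dist_comm]
          have := hfd a ha.1
          rwa [show f a ha.1 = g a from (dif_pos ha.1).symm, ha.2] at this
      · intro a ha b hb hab
        simp only [Finset.mem_filter] at ha hb
        exact hSind a ha.1 b hb.1 hab
end

section
/- Let p be a point of the Euclidean plane ℝ², r ≥ 0, and A a set of points of ℝ² such that every a ∈ A satisfies a ≠ p and d(p, a) ≤ r, and such that any two distinct points of A are at distance greater than r. Then A has at most 5 elements. -/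
open Real

/-- Gap lemma on the real line: if all pairwise distances in a finite set exceed `d ≥ 0`,
then the diameter is at least `(card - 1) * d`. -/
lemma finset_gap_aux (d : ℝ) (hd : 0 ≤ d) : ∀ (n : ℕ) (S : Finset ℝ) (hS : S.Nonempty),
    S.card = n → (∀ x ∈ S, ∀ y ∈ S, x ≠ y → d < |x - y|) →
    ((n : ℝ) - 1) * d ≤ S.max' hS - S.min' hS := by
  intro n
  induction n with
  | zero =>
    intro S hS hcard _
    rw [Finset.card_eq_zero] at hcard
    simp [hcard] at hS
  | succ m ih =>
    intro S hS hcard hpair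
    rcases Nat.eq_zero_or_pos m with hm | hm
    · subst hm
      have h1 := S.min'_le _ (S.max'_mem hS)
      push_cast
      nlinarith
    · have hamem := S.min'_mem hS
      set a := S.min' hS with ha
      set S' := S.erase a with hS'def
      have hS' : S'.Nonempty := by
        rw [← Finset.card_pos, hS'def, Finset.card_erase_of_mem hamem, hcard]
        omega
      have hcard' : S'.card = m := by
        rw [hS'def, Finset.card_erase_of_mem hamem, hcard]
        omega
      have hpair' : ∀ x ∈ S', ∀ y ∈ S', x ≠ y → d < |x - y| := fun x hx y hy =>
        hpair x (Finset.mem_of_mem_erase hx) y (Finset.mem_of_mem_erase hy)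
      have ihh := ih S' hS' hcard' hpair'
      have hmin' : a + d ≤ S'.min' hS' := by
        have hmem := S'.min'_mem hS'
        have hne : S'.min' hS' ≠ a := Finset.ne_of_mem_erase hmem
        have hge : a ≤ S'.min' hS' := S.min'_le _ (Finset.mem_of_mem_erase hmem)
        have h2 := hpair _ (Finset.mem_of_mem_erase hmem) a hamem hne
        rw [abs_of_nonneg (by linarith)] at h2
        linarith
      have hmax' : S'.max' hS' ≤ S.max' hS :=
        Finset.max'_le _ _ _ (fun y hy => S.le_max' y (Finset.mem_of_mem_erase hy))
      push_cast
      linarith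

/-- If two nonzero complex numbers of modulus at most `r` are at distance more than `r`,
then the difference of their arguments, which lies in `(-2π, 2π)`, has absolute value
in `(π/3, 5π/3)`. -/
lemma arg_gap {r : ℝ} {z w : ℂ} (hz : z ≠ 0) (hw : w ≠ 0)
    (hzr : ‖z‖ ≤ r) (hwr : ‖w‖ ≤ r)
    (hd : r < ‖z - w‖) :
    π / 3 < |z.arg - w.arg| ∧ |z.arg - w.arg| < 5 * π / 3 := by
  have hπ := Real.pi_pos
  set u := z * (starRingEnd ℂ) w with hu
  have hu0 : u ≠ 0 := mul_ne_zero hz ((map_ne_zero _).mpr hw)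
  have habs : ‖u‖ = ‖z‖ * ‖w‖ := by
    rw [hu, norm_mul, Complex.norm_conj]
  have hx0 : (0 : ℝ) ≤ ‖z‖ := norm_nonneg z
  have hy0 : (0 : ℝ) ≤ ‖w‖ := norm_nonneg w
  -- law of cosines bound: 2 * re u < |z| * |w|
  have hre : 2 * u.re < ‖z‖ * ‖w‖ := by
    have h1 := Complex.normSq_sub z w
    have h2 : Complex.normSq z = ‖z‖ ^ 2 := (Complex.sq_norm z).symm
    have h3 : Complex.normSq w = ‖w‖ ^ 2 := (Complex.sq_norm w).symm
    have h4 : Complex.normSq (z - w) = ‖z - w‖ ^ 2 := (Complex.sq_norm _).symm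
    have h5 : r ^ 2 < ‖z - w‖ ^ 2 := by
      have := norm_nonneg (z - w)
      nlinarith
    nlinarith [mul_nonneg (sub_nonneg.mpr hzr) (sub_nonneg.mpr hwr),
      mul_nonneg (sub_nonneg.mpr hzr) hx0, mul_nonneg (sub_nonneg.mpr hwr) hy0]
  have habspos : 0 < ‖u‖ := norm_pos_iff.mpr hu0
  have hcos : Real.cos u.arg < 1 / 2 := by
    rw [Complex.cos_arg hu0, div_lt_iff₀ habspos, habs]
    linarith
  -- hence π/3 < |arg u|
  have hα3 : π / 3 < |u.arg| := by
    have h1 : Real.cos |u.arg| < Real.cos (π / 3) := by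
      rw [Real.cos_abs, Real.cos_pi_div_three]; exact hcos
    by_contra hcon
    push_neg at hcon
    have := Real.strictAntiOn_cos.le_iff_ge
      (⟨abs_nonneg _, Complex.abs_arg_le_pi u⟩ : |u.arg| ∈ Set.Icc 0 π)
      (⟨by linarith, by linarith⟩ : π / 3 ∈ Set.Icc 0 π)
    have h2 := this.mp (le_of_lt h1)
    have h3 : |u.arg| = π / 3 := le_antisymm hcon h2
    rw [h3] at h1
    exact lt_irrefl _ h1
  -- arg u = arg z - arg w modulo 2π
  have hangle : (u.arg : Real.Angle) = ((z.arg - w.arg : ℝ) : Real.Angle) := by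
    rw [hu, Complex.arg_mul_coe_angle hz ((map_ne_zero _).mpr hw),
      Complex.arg_conj_coe_angle, Real.Angle.coe_sub]
    rfl
  obtain ⟨k, hk⟩ := Real.Angle.angle_eq_iff_two_pi_dvd_sub.mp hangle
  -- bounds
  have hαle : |u.arg| ≤ π := Complex.abs_arg_le_pi u
  have hα1 : u.arg ≤ π := (abs_le.mp hαle).2
  have hα2 : -π ≤ u.arg := (abs_le.mp hαle).1
  have hz1 : -π < z.arg := Complex.neg_pi_lt_arg z
  have hz2 : z.arg ≤ π := Complex.arg_le_pi z
  have hw1 : -π < w.arg := Complex.neg_pi_lt_arg w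
  have hw2 : w.arg ≤ π := Complex.arg_le_pi w
  have hkbound : k = -1 ∨ k = 0 ∨ k = 1 := by
    have h1 : (2 : ℝ) * π * k < 3 * π := by
      rw [← hk]; rcases abs_cases (z.arg - w.arg) with ⟨h, h'⟩ | ⟨h, h'⟩ <;> linarith
    have h2 : (-3 : ℝ) * π < 2 * π * k := by
      rw [← hk]; rcases abs_cases (z.arg - w.arg) with ⟨h, h'⟩ | ⟨h, h'⟩ <;> linarith
    have hk1 : (k : ℝ) < 2 := by nlinarith
    have hk2 : (-2 : ℝ) < k := by nlinarith
    have hk1' : k < 2 := by exact_mod_cast hk1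
    have hk2' : -2 < k := by exact_mod_cast hk2
    omega
  have hα3' : π / 3 < u.arg ∨ u.arg < -(π / 3) := by
    rcases abs_cases u.arg with ⟨h, h'⟩ | ⟨h, h'⟩
    · left; linarith
    · right; linarith
  have key : ∀ x : ℝ, π / 3 < x → x < 5 * π / 3 → (π / 3 < |x| ∧ |x| < 5 * π / 3) := by
    intro x h1 h2
    rw [abs_of_pos (by linarith)]
    exact ⟨h1, h2⟩
  have hΔ1 : -2 * π < z.arg - w.arg := by linarith
  have hΔ2 : z.arg - w.arg < 2 * π := by linarith
  rcases hkbound with rfl | rfl | rfl <;> push_cast at hk <;> rcases hα3' with h | h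
  · exfalso; linarith
  · exact key _ (by linarith) (by linarith)
  · exact key _ (by linarith) (by linarith)
  · have h2 := key (-(z.arg - w.arg)) (by linarith) (by linarith)
    rwa [abs_neg] at h2
  · have h2 := key (-(z.arg - w.arg)) (by linarith) (by linarith)
    rwa [abs_neg] at h2
  · exfalso; linarith

/-- In the Euclidean plane, any point `p` has at most 5 neighbors
(points at distance at most `r`, other than `p`) that are pairwise at distance
greater than `r` from each other. -/
theorem euclidean_plane_at_most_five_independent_neighbors
    (p : EuclideanSpace ℝ (Fin 2)) (r : ℝ) (hr : 0 ≤ r)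
    (A : Set (EuclideanSpace ℝ (Fin 2)))
    (hA : ∀ a ∈ A, a ≠ p ∧ dist p a ≤ r)
    (hind : ∀ a ∈ A, ∀ b ∈ A, a ≠ b → dist a b > r) :
    A.encard ≤ 5 := by
  have hπ := Real.pi_pos
  by_contra hcon
  push_neg at hcon
  have h6 : (6 : ℕ∞) ≤ A.encard := Order.add_one_le_of_lt hcon
  obtain ⟨t, hts, htc⟩ := Set.exists_subset_encard_eq h6
  have htfin : t.Finite := Set.finite_of_encard_eq_coe (by exact_mod_cast htc)
  have hTcard : htfin.toFinset.card = 6 := by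
    have := htfin.encard_eq_coe_toFinset_card
    rw [htc] at this
    exact_mod_cast this.symm
  -- identify the plane with ℂ
  set f := Complex.orthonormalBasisOneI.repr.symm with hf
  set g : EuclideanSpace ℝ (Fin 2) → ℝ := fun a => (f a - f p).arg with hg
  -- key pairwise fact for points of A
  have hkey : ∀ a ∈ A, ∀ b ∈ A, a ≠ b →
      π / 3 < |g a - g b| ∧ |g a - g b| < 5 * π / 3 := by
    intro a ha b hb hab
    have hza : f a - f p ≠ 0 := sub_ne_zero.mpr (f.injective.ne (hA a ha).1)
    have hzb : f b - f p ≠ 0 := sub_ne_zero.mpr (f.injective.ne (hA b hb).1)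
    have hda : ‖f a - f p‖ = dist a p := by
      rw [← Complex.dist_eq, f.dist_map]
    have hdb : ‖f b - f p‖ = dist b p := by
      rw [← Complex.dist_eq, f.dist_map]
    have hdab : ‖(f a - f p) - (f b - f p)‖ = dist a b := by
      have : (f a - f p) - (f b - f p) = f a - f b := by ring
      rw [this, ← Complex.dist_eq, f.dist_map]
    refine arg_gap (r := r) hza hzb ?_ ?_ ?_
    · rw [hda, dist_comm]; exact (hA a ha).2
    · rw [hdb, dist_comm]; exact (hA b hb).2
    · rw [hdab]; exact hind a ha b hb hab
  -- g is injective on t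
  have hinj : Set.InjOn g ↑htfin.toFinset := by
    intro a ha b hb hgab
    by_contra hab
    have h1 := (hkey a (hts (htfin.mem_toFinset.mp ha)) b (hts (htfin.mem_toFinset.mp hb)) hab).1
    rw [hgab, sub_self, abs_zero] at h1
    linarith
  set S := htfin.toFinset.image g with hSdef
  have hScard : S.card = 6 := by
    rw [hSdef, Finset.card_image_of_injOn hinj, hTcard]
  have hSne : S.Nonempty := by
    rw [← Finset.card_pos, hScard]; omega
  have hSpair : ∀ x ∈ S, ∀ y ∈ S, x ≠ y → π / 3 < |x - y| := by
    intro x hx y hy hxy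
    obtain ⟨a, ha, rfl⟩ := Finset.mem_image.mp hx
    obtain ⟨b, hb, rfl⟩ := Finset.mem_image.mp hy
    have hab : a ≠ b := fun h => hxy (by rw [h])
    exact (hkey a (hts (htfin.mem_toFinset.mp ha)) b (hts (htfin.mem_toFinset.mp hb)) hab).1
  have hgap := finset_gap_aux (π / 3) (by linarith) 6 S hSne hScard hSpair
  -- but the diameter of S is less than 5π/3
  obtain ⟨a, ha, hga⟩ := Finset.mem_image.mp (S.max'_mem hSne)
  obtain ⟨b, hb, hgb⟩ := Finset.mem_image.mp (S.min'_mem hSne)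
  have hminmax : S.min' hSne ≤ S.max' hSne := S.min'_le _ (S.max'_mem hSne)
  rcases eq_or_ne a b with rfl | hab
  · have heq : S.max' hSne = S.min' hSne := by rw [← hga, ← hgb]
    rw [heq] at hgap
    norm_num at hgap
    linarith
  · have h2 := (hkey a (hts (htfin.mem_toFinset.mp ha)) b (hts (htfin.mem_toFinset.mp hb)) hab).2
    rw [hga, hgb, abs_of_nonneg (by linarith)] at h2
    norm_num at hgap
    linarith
end

section
/- Let p be a point of ℝ² equipped with the Manhattan (ℓ1) distance d₁(x, y) = |x₁ − y₁| + |x₂ − y₂|, let r ≥ 0, and let A be a set of points of ℝ² such that every a ∈ A satisfies a ≠ p and d₁(p, a) ≤ r, and such that any two distinct points of A are at ℓ1-distance greater than r. Then A has at most 7 elements. -/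
/-- The Manhattan (ℓ1) distance on the plane `ℝ × ℝ`. -/
noncomputable def manhattanDist (x y : ℝ × ℝ) : ℝ := |x.1 - y.1| + |x.2 - y.2|

/-- In the plane with the Manhattan distance, any point `p` has at
most 7 neighbors (points at ℓ1-distance at most `r`, other than `p`) that are
pairwise at ℓ1-distance greater than `r` from each other. -/
theorem manhattan_plane_at_most_seven_independent_neighbors
    (p : ℝ × ℝ) (r : ℝ) (hr : 0 ≤ r)
    (A : Set (ℝ × ℝ))
    (hA : ∀ a ∈ A, a ≠ p ∧ manhattanDist p a ≤ r)
    (hind : ∀ a ∈ A, ∀ b ∈ A, a ≠ b → manhattanDist a b > r) :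
    A.encard ≤ 7 := by
  classical
  set g : ℝ × ℝ → Bool × Bool := fun a =>
    (decide (0 ≤ (a.1 - p.1) + (a.2 - p.2)), decide (0 ≤ (a.1 - p.1) - (a.2 - p.2))) with hg
  have hinj : Set.InjOn g A := by
    intro a ha b hb hgab
    by_contra hne
    have h := hind a ha b hb hne
    have h1 := (hA a ha).2
    have h2 := (hA b hb).2
    unfold manhattanDist at h h1 h2
    simp only [hg, Prod.mk.injEq, decide_eq_decide] at hgab
    obtain ⟨hU, hV⟩ := hgab
    have pa1 : p.1 - a.1 ≤ |p.1 - a.1| := le_abs_self _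
    have pa1' : -(p.1 - a.1) ≤ |p.1 - a.1| := neg_le_abs _
    have pa2 : p.2 - a.2 ≤ |p.2 - a.2| := le_abs_self _
    have pa2' : -(p.2 - a.2) ≤ |p.2 - a.2| := neg_le_abs _
    have pb1 : p.1 - b.1 ≤ |p.1 - b.1| := le_abs_self _
    have pb1' : -(p.1 - b.1) ≤ |p.1 - b.1| := neg_le_abs _
    have pb2 : p.2 - b.2 ≤ |p.2 - b.2| := le_abs_self _
    have pb2' : -(p.2 - b.2) ≤ |p.2 - b.2| := neg_le_abs _
    rcases le_or_gt 0 ((a.1 - p.1) + (a.2 - p.2)) with hu | hu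
    · have hub : 0 ≤ (b.1 - p.1) + (b.2 - p.2) := hU.mp hu
      rcases le_or_gt 0 ((a.1 - p.1) - (a.2 - p.2)) with hv | hv
      · have hvb : 0 ≤ (b.1 - p.1) - (b.2 - p.2) := hV.mp hv
        rcases abs_cases (a.1 - b.1) with ⟨e1, _⟩ | ⟨e1, _⟩ <;>
          rcases abs_cases (a.2 - b.2) with ⟨e2, _⟩ | ⟨e2, _⟩ <;> linarith
      · have hvb : ¬ (0 ≤ (b.1 - p.1) - (b.2 - p.2)) := fun hh => hv.not_ge (hV.mpr hh)
        push_neg at hvb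
        rcases abs_cases (a.1 - b.1) with ⟨e1, _⟩ | ⟨e1, _⟩ <;>
          rcases abs_cases (a.2 - b.2) with ⟨e2, _⟩ | ⟨e2, _⟩ <;> linarith
    · have hub : ¬ (0 ≤ (b.1 - p.1) + (b.2 - p.2)) := fun hh => hu.not_ge (hU.mpr hh)
      push_neg at hub
      rcases le_or_gt 0 ((a.1 - p.1) - (a.2 - p.2)) with hv | hv
      · have hvb : 0 ≤ (b.1 - p.1) - (b.2 - p.2) := hV.mp hv
        rcases abs_cases (a.1 - b.1) with ⟨e1, _⟩ | ⟨e1, _⟩ <;>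
          rcases abs_cases (a.2 - b.2) with ⟨e2, _⟩ | ⟨e2, _⟩ <;> linarith
      · have hvb : ¬ (0 ≤ (b.1 - p.1) - (b.2 - p.2)) := fun hh => hv.not_ge (hV.mpr hh)
        push_neg at hvb
        rcases abs_cases (a.1 - b.1) with ⟨e1, _⟩ | ⟨e1, _⟩ <;>
          rcases abs_cases (a.2 - b.2) with ⟨e2, _⟩ | ⟨e2, _⟩ <;> linarith
  calc A.encard = (g '' A).encard := (hinj.encard_image).symm
    _ ≤ (Set.univ : Set (Bool × Bool)).encard := Set.encard_mono (Set.subset_univ _)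
    _ = 4 := by simp [Set.encard_univ, Nat.card_eq_fintype_card]
    _ ≤ 7 := by norm_num
end

section
/- Let p be a point of the Euclidean space ℝ³, r ≥ 0, and A a set of points of ℝ³ such that every a ∈ A satisfies a ≠ p and d(p, a) ≤ r, and such that any two distinct points of A are at distance greater than r. Then A has at most 24 elements. -/
open MeasureTheory Metric Real RealInnerProductSpace

noncomputable section

theorem disk_area (c : ℝ) (hc : 0 ≤ c) :
    volume {g : Fin 2 → ℝ | g 0 ^ 2 + g 1 ^ 2 ≤ c} = ENNReal.ofReal (Real.pi * c) := by
  have key : {g : Fin 2 → ℝ | g 0 ^ 2 + g 1 ^ 2 ≤ c} =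
      ((MeasurableEquiv.toLp 2 (Fin 2 → ℝ)).symm).symm ⁻¹'
        (closedBall (0 : EuclideanSpace ℝ (Fin 2)) (Real.sqrt c)) := by
    ext g
    simp only [Set.mem_setOf_eq, Set.mem_preimage, mem_closedBall, dist_zero_right]
    rw [EuclideanSpace.norm_eq, Real.sqrt_le_iff]
    have he : ∀ i, ‖((MeasurableEquiv.toLp 2 (Fin 2 → ℝ)).symm).symm g i‖ ^ 2 = g i ^ 2 := by
      intro i; simp [sq_abs]
    rw [Fin.sum_univ_two, he 0, he 1, Real.sq_sqrt hc]
    have := Real.sqrt_nonneg c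
    tauto
  rw [key, ((EuclideanSpace.volume_preserving_symm_measurableEquiv_toLp (Fin 2)).symm).measure_preimage
    measurableSet_closedBall.nullMeasurableSet]
  rw [EuclideanSpace.volume_closedBall]
  simp only [Fintype.card_fin]
  rw [show ((2:ℕ):ℝ)/2 + 1 = 1 + 1 by norm_num, Real.Gamma_add_one one_ne_zero, Real.Gamma_one]
  rw [Real.sq_sqrt Real.pi_nonneg, ← ENNReal.ofReal_pow (Real.sqrt_nonneg c),
    Real.sq_sqrt hc, ← ENNReal.ofReal_mul (by positivity)]
  ring_nf

theorem stdcone_vol (h : ℝ) (hh : 0 ≤ h) :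
    volume {f : Fin 3 → ℝ | 0 < f 2 ∧ f 2 ≤ h ∧ f 0 ^ 2 + f 1 ^ 2 ≤ f 2 ^ 2 / 3}
      = ENNReal.ofReal (Real.pi * h ^ 3 / 9) := by
  set T := {f : Fin 3 → ℝ | 0 < f 2 ∧ f 2 ≤ h ∧ f 0 ^ 2 + f 1 ^ 2 ≤ f 2 ^ 2 / 3} with hT
  have hTm : MeasurableSet T := by
    apply MeasurableSet.inter
    · exact measurableSet_lt measurable_const (measurable_pi_apply 2)
    apply MeasurableSet.inter
    · exact measurableSet_le (measurable_pi_apply 2) measurable_const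
    · exact measurableSet_le
        (((measurable_pi_apply 0).pow_const 2).add ((measurable_pi_apply 1).pow_const 2))
        (((measurable_pi_apply 2).pow_const 2).div_const 3)
  have e := MeasurableEquiv.piFinSuccAbove (fun _ : Fin 3 => ℝ) 2
  have hmp := (volume_preserving_piFinSuccAbove (fun _ : Fin 3 => ℝ) 2).symm
  rw [← hmp.measure_preimage hTm.nullMeasurableSet]
  have hset : (MeasurableEquiv.piFinSuccAbove (fun _ : Fin 3 => ℝ) 2).symm ⁻¹' T =
      {q : ℝ × (Fin 2 → ℝ) | 0 < q.1 ∧ q.1 ≤ h ∧ q.2 0 ^ 2 + q.2 1 ^ 2 ≤ q.1 ^ 2 / 3} := by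
    ext ⟨z, g⟩
    set f := (MeasurableEquiv.piFinSuccAbove (fun _ : Fin 3 => ℝ) 2).symm (z, g) with hf
    have hq : (MeasurableEquiv.piFinSuccAbove (fun _ : Fin 3 => ℝ) 2) f = (z, g) :=
      MeasurableEquiv.apply_symm_apply _ _
    rw [MeasurableEquiv.piFinSuccAbove_apply] at hq
    have h2 : f 2 = z := congrArg Prod.fst hq
    have hsnd : ∀ j : Fin 2, f ((2:Fin 3).succAbove j) = g j :=
      fun j => congrFun (congrArg Prod.snd hq) j
    have h0 : f 0 = g 0 := by
      rw [show (0:Fin 3) = (2:Fin 3).succAbove 0 from by decide]; exact hsnd 0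
    have h1 : f 1 = g 1 := by
      rw [show (1:Fin 3) = (2:Fin 3).succAbove 1 from by decide]; exact hsnd 1
    simp only [Set.mem_preimage, hT, Set.mem_setOf_eq, ← hf, h0, h1, h2]
  rw [hset]
  have hSm : MeasurableSet {q : ℝ × (Fin 2 → ℝ) |
      0 < q.1 ∧ q.1 ≤ h ∧ q.2 0 ^ 2 + q.2 1 ^ 2 ≤ q.1 ^ 2 / 3} := by
    apply MeasurableSet.inter
    · exact measurableSet_lt measurable_const measurable_fst
    apply MeasurableSet.inter
    · exact measurableSet_le measurable_fst measurable_const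
    · exact measurableSet_le
        (((measurable_snd.eval (a := (0 : Fin 2))).pow_const 2).add
          ((measurable_snd.eval (a := (1 : Fin 2))).pow_const 2))
        ((measurable_fst.pow_const 2).div_const 3)
  rw [Measure.volume_eq_prod, Measure.prod_apply hSm]
  have hsec : (fun z : ℝ => volume (Prod.mk z ⁻¹'
      {q : ℝ × (Fin 2 → ℝ) | 0 < q.1 ∧ q.1 ≤ h ∧ q.2 0 ^ 2 + q.2 1 ^ 2 ≤ q.1 ^ 2 / 3})) =
      Set.indicator (Set.Ioc 0 h) (fun z => ENNReal.ofReal (Real.pi * (z ^ 2 / 3))) := by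
    funext z
    by_cases hz : z ∈ Set.Ioc (0:ℝ) h
    · rw [Set.indicator_of_mem hz]
      have : Prod.mk z ⁻¹' {q : ℝ × (Fin 2 → ℝ) |
          0 < q.1 ∧ q.1 ≤ h ∧ q.2 0 ^ 2 + q.2 1 ^ 2 ≤ q.1 ^ 2 / 3} =
          {g : Fin 2 → ℝ | g 0 ^ 2 + g 1 ^ 2 ≤ z ^ 2 / 3} := by
        ext g; simp only [Set.mem_preimage, Set.mem_setOf_eq]
        exact ⟨fun hx => hx.2.2, fun hx => ⟨hz.1, hz.2, hx⟩⟩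
      rw [this, disk_area _ (by positivity)]
    · rw [Set.indicator_of_notMem hz]
      have : Prod.mk z ⁻¹' {q : ℝ × (Fin 2 → ℝ) |
          0 < q.1 ∧ q.1 ≤ h ∧ q.2 0 ^ 2 + q.2 1 ^ 2 ≤ q.1 ^ 2 / 3} = ∅ := by
        ext g; simp only [Set.mem_preimage, Set.mem_setOf_eq, Set.mem_empty_iff_false,
          iff_false]
        intro hx
        exact hz ⟨hx.1, hx.2.1⟩
      rw [this, measure_empty]
  rw [hsec]
  have hind : lintegral volume ((Set.Ioc 0 h).indicator fun z => ENNReal.ofReal (Real.pi * (z ^ 2 / 3)))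
      = ∫⁻ z in Set.Ioc 0 h, ENNReal.ofReal (Real.pi * (z ^ 2 / 3)) :=
    lintegral_indicator measurableSet_Ioc _
  rw [hind]
  have hint : IntegrableOn (fun z : ℝ => Real.pi * (z ^ 2 / 3)) (Set.Ioc 0 h) := by
    apply Continuous.integrableOn_Ioc
    continuity
  rw [← ofReal_integral_eq_lintegral_ofReal hint
    (Filter.Eventually.of_forall fun z => by positivity)]
  congr 1
  rw [← intervalIntegral.integral_of_le hh]
  have : ∀ z : ℝ, Real.pi * (z ^ 2 / 3) = (Real.pi / 3) * z ^ 2 := fun z => by ring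
  simp_rw [this, intervalIntegral.integral_const_mul, integral_pow]
  ring


def coneOf (u : EuclideanSpace ℝ (Fin 3)) : Set (EuclideanSpace ℝ (Fin 3)) :=
  {x | 0 < ⟪u, x⟫ ∧ ⟪u, x⟫ ≤ Real.sqrt 3 / 2 ∧ ‖x‖ ^ 2 ≤ 4 / 3 * ⟪u, x⟫ ^ 2}

theorem coneOf_measurableSet (u : EuclideanSpace ℝ (Fin 3)) : MeasurableSet (coneOf u) := by
  have hi : Measurable fun x : EuclideanSpace ℝ (Fin 3) => ⟪u, x⟫ :=
    (continuous_const.inner continuous_id).measurable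
  have hn : Measurable fun x : EuclideanSpace ℝ (Fin 3) => ‖x‖ ^ 2 :=
    (continuous_norm.pow 2).measurable
  apply MeasurableSet.inter
  · exact measurableSet_lt measurable_const hi
  apply MeasurableSet.inter
  · exact measurableSet_le hi measurable_const
  · exact measurableSet_le hn ((hi.pow_const 2).const_mul (4/3))

theorem coneOf_subset (u : EuclideanSpace ℝ (Fin 3)) :
    coneOf u ⊆ closedBall 0 1 := by
  rintro x ⟨h1, h2, h3⟩
  rw [mem_closedBall, dist_zero_right]
  have h4 : ⟪u, x⟫ ^ 2 ≤ 3 / 4 := by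
    nlinarith [Real.sq_sqrt (by norm_num : (0:ℝ) ≤ 3)]
  nlinarith [norm_nonneg x]

theorem norm_sq_eq3 (x : EuclideanSpace ℝ (Fin 3)) : ‖x‖ ^ 2 = x 0 ^ 2 + x 1 ^ 2 + x 2 ^ 2 := by
  rw [← real_inner_self_eq_norm_sq, PiLp.inner_apply]
  simp only [RCLike.inner_apply, conj_trivial, Fin.sum_univ_three]
  ring

theorem coneOf_e0_vol :
    volume (coneOf (EuclideanSpace.single (2 : Fin 3) (1:ℝ)))
      = ENNReal.ofReal (Real.pi * (Real.sqrt 3 / 2) ^ 3 / 9) := by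
  have h3 : (0:ℝ) ≤ Real.sqrt 3 / 2 := by positivity
  have key : coneOf (EuclideanSpace.single (2 : Fin 3) (1:ℝ)) =
      ((MeasurableEquiv.toLp 2 (Fin 3 → ℝ)).symm) ⁻¹'
        {f : Fin 3 → ℝ | 0 < f 2 ∧ f 2 ≤ Real.sqrt 3 / 2 ∧ f 0 ^ 2 + f 1 ^ 2 ≤ f 2 ^ 2 / 3} := by
    ext x
    have hc : ∀ i : Fin 3, ((MeasurableEquiv.toLp 2 (Fin 3 → ℝ)).symm) x i = x i := fun _ => rfl
    simp only [coneOf, Set.mem_setOf_eq, Set.mem_preimage, hc,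
      EuclideanSpace.inner_single_left, conj_trivial, one_mul, norm_sq_eq3]
    constructor
    · rintro ⟨a, b, c⟩; exact ⟨a, b, by linarith⟩
    · rintro ⟨a, b, c⟩; exact ⟨a, b, by linarith⟩
  rw [key, (EuclideanSpace.volume_preserving_symm_measurableEquiv_toLp (Fin 3)).measure_preimage _,
    stdcone_vol _ h3]
  · apply MeasurableSet.nullMeasurableSet
    apply MeasurableSet.inter
    · exact measurableSet_lt measurable_const (measurable_pi_apply 2)
    apply MeasurableSet.inter
    · exact measurableSet_le (measurable_pi_apply 2) measurable_const
    · exact measurableSet_le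
        (((measurable_pi_apply 0).pow_const 2).add ((measurable_pi_apply 1).pow_const 2))
        (((measurable_pi_apply 2).pow_const 2).div_const 3)

theorem coneOf_vol (u : EuclideanSpace ℝ (Fin 3)) (hu : ‖u‖ = 1) :
    volume (coneOf u) = ENNReal.ofReal (Real.pi * (Real.sqrt 3 / 2) ^ 3 / 9) := by
  set e₀ : EuclideanSpace ℝ (Fin 3) := EuclideanSpace.single (2 : Fin 3) (1:ℝ) with he₀
  have hT : (Submodule.reflection (ℝ ∙ (u - e₀))ᗮ) u = e₀ := by
    apply Submodule.reflection_sub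
    rw [hu, he₀, EuclideanSpace.norm_single, norm_one]
  set T := Submodule.reflection (ℝ ∙ (u - e₀))ᗮ
  have hpre : coneOf u = T ⁻¹' coneOf e₀ := by
    ext x
    simp only [coneOf, Set.mem_setOf_eq, Set.mem_preimage]
    rw [← hT, LinearIsometryEquiv.inner_map_map, T.norm_map]
  rw [hpre, T.measurePreserving.measure_preimage
    (coneOf_measurableSet e₀).nullMeasurableSet, coneOf_e0_vol]



theorem cone_arith {t s m2 ipuv q n1 n2 : ℝ} (ht0 : 0 < t) (hs0 : 0 < s) (hm2 : 0 < m2)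
    (e1 : q = m2 ^ 2 * ipuv - m2 * (t * s))
    (e2 : n1 ^ 2 = m2 ^ 2 - m2 * t ^ 2) (e3 : n2 ^ 2 = m2 ^ 2 - m2 * s ^ 2)
    (hn1 : 0 ≤ n1) (hn2 : 0 ≤ n2) (hcs : -(n1 * n2) ≤ q)
    (ht2 : m2 ≤ 4 / 3 * t ^ 2) (hs2 : m2 ≤ 4 / 3 * s ^ 2) : 1 / 2 ≤ ipuv := by
  have hprod : n1 * n2 ≤ m2 ^ 2 / 4 := by
    nlinarith [sq_nonneg (n1 - n2)]
  have h9' : (3 / 4 * m2) ^ 2 ≤ (t * s) ^ 2 := by nlinarith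
  have hts : 3 / 4 * m2 ≤ t * s := by
    have h1 : (0:ℝ) ≤ 3 / 4 * m2 := by linarith
    have h2 : (0:ℝ) ≤ t * s := le_of_lt (mul_pos ht0 hs0)
    exact (pow_le_pow_iff_left₀ h1 h2 two_ne_zero).mp h9'
  have hB : m2 * (3 / 4 * m2) ≤ m2 * (t * s) :=
    mul_le_mul_of_nonneg_left hts (le_of_lt hm2)
  have key : m2 ^ 2 * (1/2) ≤ m2 ^ 2 * ipuv := by nlinarith
  have := (mul_le_mul_iff_right₀ (pow_pos hm2 2)).mp key
  linarith

theorem coneOf_disjoint {u v : EuclideanSpace ℝ (Fin 3)} (hu : ‖u‖ = 1) (hv : ‖v‖ = 1)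
    (huv : ⟪u, v⟫ < 1 / 2) : Disjoint (coneOf u) (coneOf v) := by
  rw [Set.disjoint_left]
  rintro x ⟨ht0, -, hxt⟩ ⟨hs0, -, hxs⟩
  have hx0 : x ≠ 0 := by
    rintro rfl
    rw [inner_zero_right] at ht0
    exact lt_irrefl 0 ht0
  have hm2pos : (0:ℝ) < ‖x‖ ^ 2 := pow_pos (norm_pos_iff.mpr hx0) 2
  have hxx : ⟪x, x⟫ = ‖x‖ ^ 2 := real_inner_self_eq_norm_sq x
  have hxv : ⟪x, v⟫ = ⟪v, x⟫ := real_inner_comm v x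
  have hxu : ⟪x, u⟫ = ⟪u, x⟫ := real_inner_comm u x
  have e1 : ⟪‖x‖ ^ 2 • u - ⟪u, x⟫ • x, ‖x‖ ^ 2 • v - ⟪v, x⟫ • x⟫
      = (‖x‖ ^ 2) ^ 2 * ⟪u, v⟫ - ‖x‖ ^ 2 * (⟪u, x⟫ * ⟪v, x⟫) := by
    simp only [inner_sub_left, inner_sub_right, real_inner_smul_left,
      real_inner_smul_right, hxx, hxv, hxu]
    ring
  have e2 : ‖‖x‖ ^ 2 • u - ⟪u, x⟫ • x‖ ^ 2 = (‖x‖ ^ 2) ^ 2 - ‖x‖ ^ 2 * ⟪u, x⟫ ^ 2 := by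
    rw [norm_sub_sq_real, real_inner_smul_left, real_inner_smul_right,
      norm_smul, norm_smul, mul_pow, mul_pow, hu]
    simp only [Real.norm_eq_abs, sq_abs]
    ring
  have e3 : ‖‖x‖ ^ 2 • v - ⟪v, x⟫ • x‖ ^ 2 = (‖x‖ ^ 2) ^ 2 - ‖x‖ ^ 2 * ⟪v, x⟫ ^ 2 := by
    rw [norm_sub_sq_real, real_inner_smul_left, real_inner_smul_right,
      norm_smul, norm_smul, mul_pow, mul_pow, hv]
    simp only [Real.norm_eq_abs, sq_abs]
    ring
  have hcs : -(‖‖x‖ ^ 2 • u - ⟪u, x⟫ • x‖ * ‖‖x‖ ^ 2 • v - ⟪v, x⟫ • x‖)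
      ≤ ⟪‖x‖ ^ 2 • u - ⟪u, x⟫ • x, ‖x‖ ^ 2 • v - ⟪v, x⟫ • x⟫ :=
    neg_le_of_abs_le (abs_real_inner_le_norm _ _)
  have := cone_arith ht0 hs0 hm2pos e1 e2 e3 (norm_nonneg _) (norm_nonneg _) hcs
    (by linarith) (by linarith)
  linarith

theorem ball3_vol : volume (closedBall (0 : EuclideanSpace ℝ (Fin 3)) 1)
    = ENNReal.ofReal (4 / 3 * Real.pi) := by
  rw [EuclideanSpace.volume_closedBall]
  have hπ := Real.pi_nonneg
  simp only [Fintype.card_fin]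
  rw [show ((3:ℕ):ℝ)/2 + 1 = 3/2 + 1 by norm_num]
  rw [Real.Gamma_add_one (by norm_num), show (3:ℝ)/2 = 1/2 + 1 by norm_num,
    Real.Gamma_add_one (by norm_num), Real.Gamma_one_half_eq]
  rw [ENNReal.ofReal_one, one_pow, one_mul]
  congr 1
  have hq : Real.sqrt Real.pi ^ 2 = Real.pi := Real.sq_sqrt hπ
  have hq1 : Real.sqrt Real.pi > 0 := Real.sqrt_pos.mpr Real.pi_pos
  field_simp
  nlinarith [hq, hq1]

/-- In Euclidean 3-dimensional space, any point `p` has at most 24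
neighbors (points at distance at most `r`, other than `p`) that are pairwise at
distance greater than `r` from each other. -/
theorem euclidean_space_at_most_24_independent_neighbors
    (p : EuclideanSpace ℝ (Fin 3)) (r : ℝ) (hr : 0 ≤ r)
    (A : Set (EuclideanSpace ℝ (Fin 3)))
    (hA : ∀ a ∈ A, a ≠ p ∧ dist p a ≤ r)
    (hind : ∀ a ∈ A, ∀ b ∈ A, a ≠ b → dist a b > r) :
    A.encard ≤ 24 := by
  by_contra hlt
  push_neg at hlt
  have h25 : (25 : ℕ∞) ≤ A.encard := Order.add_one_le_of_lt hlt
  obtain ⟨F, hFA, hFcard⟩ := Set.exists_subset_encard_eq h25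
  have hFfin : F.Finite := Set.finite_of_encard_eq_coe (k := 25) (by exact_mod_cast hFcard)
  set s : Finset (EuclideanSpace ℝ (Fin 3)) := hFfin.toFinset with hs
  have hmem : ∀ a, a ∈ s ↔ a ∈ F := fun a => hFfin.mem_toFinset
  have hcard : s.card = 25 := by
    have := hFfin.encard_eq_coe_toFinset_card
    rw [hFcard] at this
    exact_mod_cast this.symm
  -- basic facts about elements of A
  have hnpos : ∀ a ∈ A, 0 < ‖a - p‖ ∧ ‖a - p‖ ≤ r := by
    intro a ha
    obtain ⟨hne, hd⟩ := hA a ha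
    constructor
    · rw [norm_pos_iff, sub_ne_zero]; exact hne
    · rw [dist_eq_norm, norm_sub_rev] at hd; exact hd
  set u : EuclideanSpace ℝ (Fin 3) → EuclideanSpace ℝ (Fin 3) :=
    fun a => ‖a - p‖⁻¹ • (a - p) with hud
  have hu1 : ∀ a ∈ A, ‖u a‖ = 1 := by
    intro a ha
    rw [hud, norm_smul, norm_inv, norm_norm, inv_mul_cancel₀ (ne_of_gt (hnpos a ha).1)]
  have hpair : ∀ a ∈ A, ∀ b ∈ A, a ≠ b → ⟪u a, u b⟫ < 1 / 2 := by
    intro a ha b hb hab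
    obtain ⟨hxa, hxar⟩ := hnpos a ha
    obtain ⟨hxb, hxbr⟩ := hnpos b hb
    have hdd : r < ‖(a - p) - (b - p)‖ := by
      rw [sub_sub_sub_cancel_right]
      have := hind a ha b hb hab
      rwa [dist_eq_norm] at this
    have hsq : r ^ 2 < ‖(a - p) - (b - p)‖ ^ 2 := by nlinarith [norm_nonneg ((a-p)-(b-p))]
    rw [norm_sub_sq_real] at hsq
    have hkey : 2 * ⟪a - p, b - p⟫ < ‖a - p‖ * ‖b - p‖ := by
      rcases le_total ‖a - p‖ ‖b - p‖ with h | h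
      · nlinarith
      · nlinarith
    obtain ⟨I, hI⟩ : ∃ I : ℝ, ⟪a - p, b - p⟫ = I := ⟨_, rfl⟩
    rw [hI] at hkey
    rw [hud]
    simp only [real_inner_smul_left, real_inner_smul_right]
    rw [hI, show ‖b - p‖⁻¹ * (‖a - p‖⁻¹ * I)
        = I / (‖a - p‖ * ‖b - p‖) by rw [div_eq_mul_inv, mul_inv]; ring,
      div_lt_iff₀ (by positivity)]
    linarith
  -- cones are pairwise disjoint
  have hdisjoint : (↑s : Set (EuclideanSpace ℝ (Fin 3))).PairwiseDisjoint
      (fun a => coneOf (u a)) := by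
    intro a ha b hb hab
    have haA : a ∈ A := hFA ((hmem a).mp (Finset.mem_coe.mp ha))
    have hbA : b ∈ A := hFA ((hmem b).mp (Finset.mem_coe.mp hb))
    exact coneOf_disjoint (hu1 a haA) (hu1 b hbA) (hpair a haA b hbA hab)
  have hmeas : ∀ b ∈ s, MeasurableSet (coneOf (u b)) := fun b _ => coneOf_measurableSet _
  have hunion := measure_biUnion_finset (μ := volume) hdisjoint hmeas
  have hsub : (⋃ a ∈ s, coneOf (u a)) ⊆ closedBall (0 : EuclideanSpace ℝ (Fin 3)) 1 :=
    Set.iUnion₂_subset fun a _ => coneOf_subset _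
  have hvol : ∀ a ∈ s, volume (coneOf (u a))
      = ENNReal.ofReal (Real.pi * (Real.sqrt 3 / 2) ^ 3 / 9) :=
    fun a ha => coneOf_vol _ (hu1 a (hFA ((hmem a).mp ha)))
  have hsum : ∑ a ∈ s, volume (coneOf (u a))
      = 25 * ENNReal.ofReal (Real.pi * (Real.sqrt 3 / 2) ^ 3 / 9) := by
    rw [Finset.sum_congr rfl hvol, Finset.sum_const, hcard, nsmul_eq_mul]
    norm_num
  have hle : (25 : ENNReal) * ENNReal.ofReal (Real.pi * (Real.sqrt 3 / 2) ^ 3 / 9)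
      ≤ ENNReal.ofReal (4 / 3 * Real.pi) := by
    rw [← hsum, ← hunion, ← ball3_vol]
    exact measure_mono hsub
  rw [show (25 : ENNReal) = ENNReal.ofReal 25 by norm_num,
    ← ENNReal.ofReal_mul (by norm_num)] at hle
  have hreal : 25 * (Real.pi * (Real.sqrt 3 / 2) ^ 3 / 9) ≤ 4 / 3 * Real.pi :=
    (ENNReal.ofReal_le_ofReal_iff (by positivity)).mp hle
  have h17 : (1.7:ℝ) < Real.sqrt 3 := by
    rw [show (1.7:ℝ) = Real.sqrt (1.7 ^ 2) from (Real.sqrt_sq (by norm_num)).symm]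
    exact Real.sqrt_lt_sqrt (by norm_num) (by norm_num)
  have hq2 : Real.sqrt 3 ^ 2 = 3 := Real.sq_sqrt (by norm_num)
  nlinarith [Real.pi_pos, h17, hq2, mul_pos Real.pi_pos (show (0:ℝ) < Real.sqrt 3 by linarith)]

end
end

section
/- Let (X, d) be a metric space, P a finite subset of X, and 0 ≤ r′ ≤ r. Let S ⊆ P satisfy the r-coverage condition on P, and let M be a positive integer such that for every p ∈ S, every r′-independent set of points of P lying at distance at most r from p has at most M elements. Then every r′-independent subset S′ of P satisfies |S′| ≤ M · |S|. (This captures the size bound for zooming-in: an r′-DisC diverse subset S^{r′} obtained by extending an r-DisC diverse subset S^r satisfies |S^{r′}| ≤ M · |S^r|.) -/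
/-- Zooming-in size bound. In a metric space, let `S ⊆ P` satisfy
the `r`-coverage condition on `P`, let `0 ≤ r' ≤ r`, and let `M > 0` be such
that for every `p ∈ S`, every `r'`-independent set of points of `P` lying at
distance at most `r` from `p` has at most `M` elements. Then every
`r'`-independent subset `S'` of `P` satisfies `|S'| ≤ M * |S|`. -/
theorem zoom_in_size_bound {X : Type*} [MetricSpace X] (P : Finset X)
    (r r' : ℝ) (hr' : 0 ≤ r') (hr'r : r' ≤ r)
    (S : Finset X) (hSP : S ⊆ P)
    (hcov : ∀ p ∈ P, p ∈ S ∨ ∃ q ∈ S, dist p q ≤ r)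
    (M : ℕ) (hM : 0 < M)
    (hBound : ∀ p ∈ S, ∀ A : Finset X,
      (∀ a ∈ A, a ∈ P ∧ dist p a ≤ r) →
      (∀ a ∈ A, ∀ b ∈ A, a ≠ b → dist a b > r') →
      A.card ≤ M)
    (S' : Finset X) (hS'P : S' ⊆ P)
    (hS'ind : ∀ a ∈ S', ∀ b ∈ S', a ≠ b → dist a b > r') :
    S'.card ≤ M * S.card := by
  classical
  have hr : 0 ≤ r := hr'.trans hr'r
  have hex : ∀ p ∈ P, ∃ q ∈ S, dist p q ≤ r := by
    intro p hp
    rcases hcov p hp with h | h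
    · exact ⟨p, h, by simp [hr]⟩
    · exact h
  set f : X → X := fun p => if h : ∃ q ∈ S, dist p q ≤ r then h.choose else p with hf
  have hfS : ∀ p ∈ P, f p ∈ S ∧ dist p (f p) ≤ r := by
    intro p hp
    have h := hex p hp
    simp only [hf, dif_pos h]
    exact ⟨h.choose_spec.1, h.choose_spec.2⟩
  have hmaps : ∀ p ∈ S', f p ∈ S := fun p hp => (hfS p (hS'P hp)).1
  have hcard : S'.card = ∑ q ∈ S, (S'.filter fun p => f p = q).card :=
    Finset.card_eq_sum_card_fiberwise hmaps
  rw [hcard]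
  calc ∑ q ∈ S, (S'.filter fun p => f p = q).card
      ≤ ∑ _q ∈ S, M := by
        apply Finset.sum_le_sum
        intro q hq
        apply hBound q hq
        · intro a ha
          simp only [Finset.mem_filter] at ha
          refine ⟨hS'P ha.1, ?_⟩
          have := (hfS a (hS'P ha.1)).2
          rw [ha.2] at this
          rw [dist_comm]; exact this
        · intro a ha b hb hab
          simp only [Finset.mem_filter] at ha hb
          exact hS'ind a ha.1 b hb.1 hab
    _ = M * S.card := by rw [Finset.sum_const, smul_eq_mul, mul_comm]
end

section
/- Let (X, d) be a metric space, P a finite subset of X, r ≥ 0, and S an r-DisC diverse subset of P with |S| ≥ 2. Let λ be the minimum distance between two distinct points of S (so λ > r). Then for every subset S* ⊆ P with |S*| = |S|, the minimum distance λ* between two distinct points of S* satisfies λ* ≤ 3λ. -/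
/-- Let `S` be an `r`-DisC diverse subset of `P` with `|S| ≥ 2`
and let `λ` be the minimum pairwise distance of `S` (so `λ > r`). Then for
every `S* ⊆ P` with `|S*| = |S|`, the minimum pairwise distance `λ*` of `S*`
satisfies `λ* ≤ 3 λ`. -/
theorem disc_maxmin_bound {X : Type*} [MetricSpace X] (P : Finset X)
    (r : ℝ) (hr : 0 ≤ r)
    (S : Finset X) (hSP : S ⊆ P) (hS2 : 2 ≤ S.card)
    (hcov : ∀ p ∈ P, p ∈ S ∨ ∃ q ∈ S, dist p q ≤ r)
    (hind : ∀ a ∈ S, ∀ b ∈ S, a ≠ b → dist a b > r)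
    (lam : ℝ)
    (hlam : IsLeast {d : ℝ | ∃ x ∈ S, ∃ y ∈ S, x ≠ y ∧ d = dist x y} lam) :
    r < lam ∧
      ∀ Sstar : Finset X, Sstar ⊆ P → Sstar.card = S.card →
        ∀ lamstar : ℝ,
          IsLeast {d : ℝ | ∃ x ∈ Sstar, ∃ y ∈ Sstar, x ≠ y ∧ d = dist x y}
            lamstar →
          lamstar ≤ 3 * lam := by
  classical
  obtain ⟨hlam_mem, hlam_lb⟩ := hlam
  obtain ⟨x0, hx0, y0, hy0, hxy0, hlameq⟩ := hlam_mem
  have hrlam : r < lam := hlameq ▸ hind x0 hx0 y0 hy0 hxy0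
  refine ⟨hrlam, ?_⟩
  have hlam_pos : 0 < lam := lt_of_le_of_lt hr hrlam
  intro Sstar hSstarP hcard lamstar hls
  obtain ⟨hls_mem, hls_lb⟩ := hls
  have hex : ∀ p : {x // x ∈ Sstar}, ∃ q ∈ S, dist p.1 q ≤ r := by
    intro ⟨p, hp⟩
    rcases hcov p (hSstarP hp) with h | h
    · exact ⟨p, h, by simpa using hr⟩
    · exact h
  choose g hgS hgd using hex
  by_cases hinj : Function.Injective g
  · -- g is injective; image of g is all of S
    have himg : (Finset.univ.image g : Finset X) = S := by
      apply Finset.eq_of_subset_of_card_le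
      · intro x hx
        obtain ⟨p, _, rfl⟩ := Finset.mem_image.mp hx
        exact hgS p
      · rw [Finset.card_image_of_injective _ hinj, Finset.card_univ,
          Fintype.card_coe, hcard]
    have hx0' : x0 ∈ Finset.univ.image g := himg ▸ hx0
    have hy0' : y0 ∈ Finset.univ.image g := himg ▸ hy0
    obtain ⟨p, _, hpx⟩ := Finset.mem_image.mp hx0'
    obtain ⟨q, _, hqy⟩ := Finset.mem_image.mp hy0'
    have hpq : p.1 ≠ q.1 := by
      intro h
      apply hxy0
      rw [← hpx, ← hqy, Subtype.ext h]
    have hmem : dist p.1 q.1 ∈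
        {d : ℝ | ∃ x ∈ Sstar, ∃ y ∈ Sstar, x ≠ y ∧ d = dist x y} :=
      ⟨p.1, p.2, q.1, q.2, hpq, rfl⟩
    have h1 : dist p.1 q.1 ≤ dist p.1 x0 + dist x0 y0 + dist y0 q.1 :=
      dist_triangle4 _ _ _ _
    have h2 : dist p.1 x0 ≤ r := hpx ▸ hgd p
    have h3 : dist y0 q.1 ≤ r := by rw [dist_comm]; exact hqy ▸ hgd q
    have : dist p.1 q.1 ≤ 3 * lam := by
      have := hlameq ▸ h1
      nlinarith [hrlam.le]
    exact le_trans (hls_lb hmem) this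
  · -- two points of Sstar map to the same point of S
    rw [Function.not_injective_iff] at hinj
    obtain ⟨p, q, hgeq, hpq⟩ := hinj
    have hpq' : p.1 ≠ q.1 := fun h => hpq (Subtype.ext h)
    have hmem : dist p.1 q.1 ∈
        {d : ℝ | ∃ x ∈ Sstar, ∃ y ∈ Sstar, x ≠ y ∧ d = dist x y} :=
      ⟨p.1, p.2, q.1, q.2, hpq', rfl⟩
    have h1 : dist p.1 q.1 ≤ dist p.1 (g p) + dist (g p) q.1 :=
      dist_triangle _ _ _
    have h2 : dist (g p) q.1 ≤ r := by rw [hgeq, dist_comm]; exact hgd q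
    have : dist p.1 q.1 ≤ 3 * lam := by nlinarith [hgd p, hrlam.le]
    exact le_trans (hls_lb hmem) this
end

section
/- Let G be a finite simple graph with maximum degree Δ. Let v₁, …, v_m be a sequence of distinct vertices constructed greedily: for each i, the vertex v_{i+1} is chosen so that its closed neighborhood contains the maximum possible number of vertices not contained in the union of the closed neighborhoods of v₁, …, v_i (and this number is positive), and the process stops exactly when {v₁, …, v_m} is a dominating set of G. Then for every dominating set D of G (in particular for a minimum independent dominating set), m ≤ H(Δ + 1) · |D|, where H(n) = Σ_{k=1}^{n} 1/k is the n-th harmonic number. -/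
/-- Harmonic rank lemma: summing `1/rank` over a finset with injective key
is at most the harmonic number of its cardinality. -/
private lemma harmonic_rank_sum {V : Type*} [DecidableEq V] :
    ∀ (n : ℕ) (k : V → ℕ) (S : Finset V), S.card = n → Set.InjOn k S →
      ∑ x ∈ S, (1 : ℝ) / ((S.filter (fun y => k x ≤ k y)).card) ≤
        ∑ j ∈ Finset.Icc 1 n, (1 : ℝ) / j := by
  intro n
  induction n with
  | zero =>
    intro k S hS _
    rw [Finset.card_eq_zero] at hS
    subst hS; simp
  | succ n ih =>
    intro k S hS hinj
    have hne : S.Nonempty := Finset.card_pos.mp (by omega)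
    obtain ⟨x₀, hx₀S, hx₀min⟩ := S.exists_min_image k hne
    have hfilt : S.filter (fun y => k x₀ ≤ k y) = S :=
      Finset.filter_true_of_mem (fun y hy => hx₀min y hy)
    have hsum := (Finset.add_sum_erase S
        (fun x => (1 : ℝ) / ((S.filter (fun y => k x ≤ k y)).card)) hx₀S).symm
    have hcard' : (S.erase x₀).card = n := by
      rw [Finset.card_erase_of_mem hx₀S, hS]
      omega
    have hterm : ∀ x ∈ S.erase x₀,
        (1 : ℝ) / ((S.filter (fun y => k x ≤ k y)).card) =
        (1 : ℝ) / (((S.erase x₀).filter (fun y => k x ≤ k y)).card) := by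
      intro x hx
      have hx₀not : x₀ ∉ S.filter (fun y => k x ≤ k y) := by
        intro h
        have hxS := Finset.mem_of_mem_erase hx
        have h1 : k x ≤ k x₀ := (Finset.mem_filter.mp h).2
        have h2 : k x₀ ≤ k x := hx₀min x hxS
        exact (Finset.ne_of_mem_erase hx) (hinj hxS hx₀S (le_antisymm h1 h2))
      rw [Finset.filter_erase, Finset.erase_eq_of_notMem hx₀not]
    have hrest :
        ∑ x ∈ S.erase x₀, (1 : ℝ) / ((S.filter (fun y => k x ≤ k y)).card) ≤
        ∑ j ∈ Finset.Icc 1 n, (1 : ℝ) / j := by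
      rw [Finset.sum_congr rfl hterm]
      exact ih k (S.erase x₀) hcard' (hinj.mono (fun y hy => Finset.mem_of_mem_erase hy))
    have hIcc : ∑ j ∈ Finset.Icc 1 (n + 1), (1 : ℝ) / j
        = (∑ j ∈ Finset.Icc 1 n, (1 : ℝ) / j) + 1 / (n + 1 : ℕ) := by
      rw [← Finset.sum_Icc_succ_top (by omega : 1 ≤ n + 1)]
    rw [hsum, hfilt, hS, hIcc]
    push_cast
    linarith [hrest]

/-- Greedy set-cover style bound for dominating sets. Let `G` be
a finite simple graph with maximum degree `Δ` and let `v 0, …, v (m-1)` be a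
sequence of distinct vertices chosen greedily: each `v i` covers (via its
closed neighborhood) the maximum possible number of vertices not yet covered by
the closed neighborhoods of the previously chosen vertices, this number being
positive, and the process stops exactly when the chosen vertices form a
dominating set. Then for every dominating set `D` of `G`,
`m ≤ H(Δ + 1) * |D|`, where `H` is the harmonic number. -/
theorem greedy_dominating_set_bound {V : Type*} [Fintype V] [DecidableEq V]
    (G : SimpleGraph V) [DecidableRel G.Adj]
    (m : ℕ) (v : Fin m → V) (hv : Function.Injective v)
    (hgreedy : ∀ i : Fin m, ∀ u : V,
      ((insert u (G.neighborFinset u)) \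
          (Finset.Iio i).biUnion (fun j => insert (v j) (G.neighborFinset (v j)))).card ≤
        ((insert (v i) (G.neighborFinset (v i))) \
          (Finset.Iio i).biUnion (fun j => insert (v j) (G.neighborFinset (v j)))).card)
    (hpos : ∀ i : Fin m,
      0 < ((insert (v i) (G.neighborFinset (v i))) \
          (Finset.Iio i).biUnion (fun j => insert (v j) (G.neighborFinset (v j)))).card)
    (hdom : ∀ x : V, ∃ i : Fin m, x ∈ insert (v i) (G.neighborFinset (v i)))
    (D : Finset V) (hD : ∀ x : V, ∃ u ∈ D, x ∈ insert u (G.neighborFinset u)) :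
    (m : ℝ) ≤ (∑ k ∈ Finset.Icc 1 (G.maxDegree + 1), (1 : ℝ) / k) * D.card := by
  classical
  set N : V → Finset V := fun u => insert u (G.neighborFinset u) with hNdef
  set Cov : Fin m → Finset V := fun i => (Finset.Iio i).biUnion (fun j => N (v j)) with hCovdef
  set New : Fin m → Finset V := fun i => N (v i) \ Cov i with hNewdef
  have hgreedy' : ∀ (i : Fin m) (u : V), (N u \ Cov i).card ≤ (New i).card := hgreedy
  have hpos' : ∀ i : Fin m, 0 < (New i).card := hpos
  -- minimal covering index
  have hIne : ∀ x : V, (Finset.univ.filter (fun i => x ∈ N (v i))).Nonempty := by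
    intro x
    obtain ⟨i, hi⟩ := hdom x
    exact ⟨i, by simp only [Finset.mem_filter, Finset.mem_univ, true_and]; exact hi⟩
  set ι : V → Fin m := fun x => (Finset.univ.filter (fun i => x ∈ N (v i))).min' (hIne x)
    with hιdef
  have hι_mem : ∀ x, x ∈ N (v (ι x)) := by
    intro x
    have h := Finset.min'_mem _ (hIne x)
    rw [Finset.mem_filter] at h
    exact h.2
  have hι_min : ∀ x (j : Fin m), x ∈ N (v j) → ι x ≤ j := by
    intro x j hj
    exact Finset.min'_le _ _ (by simp only [Finset.mem_filter, Finset.mem_univ, true_and]; exact hj)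
  have hNew_eq : ∀ i, New i = Finset.univ.filter (fun x => ι x = i) := by
    intro i
    ext x
    simp only [hNewdef, Finset.mem_sdiff, Finset.mem_filter, Finset.mem_univ, true_and, hCovdef,
      Finset.mem_biUnion, Finset.mem_Iio, not_exists, not_and]
    constructor
    · rintro ⟨hx, hnx⟩
      have h1 : ι x ≤ i := hι_min x i hx
      rcases lt_or_eq_of_le h1 with h | h
      · exact absurd (hι_mem x) (hnx _ h)
      · exact h
    · rintro rfl
      refine ⟨hι_mem x, ?_⟩
      intro j hj hxj
      exact absurd (hι_min x j hxj) (not_le.mpr hj)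
  set c : V → ℝ := fun x => 1 / ((New (ι x)).card : ℝ) with hcdef
  -- Step 1: m = ∑ c
  have hfiber : ∀ i : Fin m, ∑ x ∈ Finset.univ.filter (fun x => ι x = i), c x = 1 := by
    intro i
    rw [← hNew_eq]
    have heach : ∀ x ∈ New i, c x = 1 / ((New i).card : ℝ) := by
      intro x hx
      have hxi : ι x = i := by
        rw [hNew_eq] at hx
        simpa using hx
      simp [hcdef, hxi]
    rw [Finset.sum_congr rfl heach, Finset.sum_const, nsmul_eq_mul, mul_one_div,
      div_self (by exact_mod_cast (hpos' i).ne')]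
  have hstep1 : (m : ℝ) = ∑ x : V, c x := by
    rw [← Finset.sum_fiberwise Finset.univ ι c]
    simp [hfiber]
  -- Step 2: split by dominating vertex
  choose d hdD hdN using hD
  have hstep2 : ∑ x : V, c x = ∑ u ∈ D, ∑ x ∈ Finset.univ.filter (fun x => d x = u), c x :=
    (Finset.sum_fiberwise_of_maps_to (fun x _ => hdD x) c).symm
  -- Step 3: per dominating vertex bound
  have hstep3 : ∀ u ∈ D, ∑ x ∈ Finset.univ.filter (fun x => d x = u), c x ≤
      ∑ j ∈ Finset.Icc 1 (G.maxDegree + 1), (1 : ℝ) / j := by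
    intro u hu
    set S := Finset.univ.filter (fun x => d x = u) with hSdef
    have hSsub : S ⊆ N u := by
      intro y hy
      have hyd : d y = u := (Finset.mem_filter.mp hy).2
      have := hdN y
      rwa [hyd] at this
    -- key function
    set C := Fintype.card V with hCdef
    set e : V → ℕ := fun x => ((Fintype.equivFin V) x : ℕ) with hedef
    set key : V → ℕ := fun x => (ι x : ℕ) * C + e x with hkeydef
    have heC : ∀ x, e x < C := fun x => ((Fintype.equivFin V) x).isLt
    have hmono : ∀ x y : V, (ι x : ℕ) < (ι y : ℕ) → key x < key y := by
      intro x y h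
      have h1 : key x < ((ι x : ℕ) + 1) * C := by
        simp only [hkeydef, add_mul, one_mul]
        exact Nat.add_lt_add_left (heC x) _
      have h2 : ((ι x : ℕ) + 1) * C ≤ (ι y : ℕ) * C := Nat.mul_le_mul_right _ h
      have h3 : (ι y : ℕ) * C ≤ key y := Nat.le_add_right _ _
      omega
    have hkeyinj : Set.InjOn key S := by
      intro x _ y _ hxy
      have hιeq : (ι x : ℕ) = (ι y : ℕ) := by
        rcases lt_trichotomy (ι x : ℕ) (ι y : ℕ) with h | h | h
        · exact absurd hxy (hmono x y h).ne
        · exact h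
        · exact absurd hxy.symm (hmono y x h).ne
      have he : e x = e y := by
        simp only [hkeydef, hιeq] at hxy
        exact Nat.add_left_cancel hxy
      exact (Fintype.equivFin V).injective (Fin.ext he)
    have hterm : ∀ x ∈ S, c x ≤ (1 : ℝ) / ((S.filter (fun y => key x ≤ key y)).card) := by
      intro x hx
      have hrankpos : 0 < (S.filter (fun y => key x ≤ key y)).card := by
        apply Finset.card_pos.mpr
        exact ⟨x, Finset.mem_filter.mpr ⟨hx, le_refl _⟩⟩
      have hrank_le : (S.filter (fun y => key x ≤ key y)).card ≤ (New (ι x)).card := by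
        refine le_trans (Finset.card_le_card ?_) (hgreedy' (ι x) u)
        intro y hy
        rw [Finset.mem_filter] at hy
        obtain ⟨hyS, hkey⟩ := hy
        have hιle : (ι x : ℕ) ≤ (ι y : ℕ) := by
          by_contra h
          push_neg at h
          exact absurd hkey (not_le.mpr (hmono y x h))
        rw [Finset.mem_sdiff]
        refine ⟨hSsub hyS, ?_⟩
        simp only [hCovdef, Finset.mem_biUnion, Finset.mem_Iio, not_exists, not_and]
        intro j hj hyj
        have := hι_min y j hyj
        have : (ι y : ℕ) ≤ (j : ℕ) := this
        have hjx : (j : ℕ) < (ι x : ℕ) := hj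
        omega
      simp only [hcdef]
      apply one_div_le_one_div_of_le
      · exact_mod_cast hrankpos
      · exact_mod_cast hrank_le
    have hcardS : S.card ≤ G.maxDegree + 1 := by
      have h1 : S.card ≤ (N u).card := Finset.card_le_card hSsub
      have h2 : (N u).card = G.degree u + 1 := by
        simp only [hNdef]
        rw [Finset.card_insert_of_notMem (by simp), SimpleGraph.card_neighborFinset_eq_degree]
      have h3 : G.degree u ≤ G.maxDegree := G.degree_le_maxDegree u
      omega
    calc ∑ x ∈ S, c x
        ≤ ∑ x ∈ S, (1 : ℝ) / ((S.filter (fun y => key x ≤ key y)).card) :=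
          Finset.sum_le_sum hterm
      _ ≤ ∑ j ∈ Finset.Icc 1 S.card, (1 : ℝ) / j :=
          harmonic_rank_sum S.card key S rfl hkeyinj
      _ ≤ ∑ j ∈ Finset.Icc 1 (G.maxDegree + 1), (1 : ℝ) / j := by
          apply Finset.sum_le_sum_of_subset_of_nonneg
          · exact Finset.Icc_subset_Icc_right (by omega)
          · intro j _ _
            positivity
  calc (m : ℝ) = ∑ x : V, c x := hstep1
    _ = ∑ u ∈ D, ∑ x ∈ Finset.univ.filter (fun x => d x = u), c x := hstep2
    _ ≤ ∑ u ∈ D, ∑ j ∈ Finset.Icc 1 (G.maxDegree + 1), (1 : ℝ) / j :=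
        Finset.sum_le_sum hstep3
    _ = (∑ j ∈ Finset.Icc 1 (G.maxDegree + 1), (1 : ℝ) / j) * D.card := by
        rw [Finset.sum_const, nsmul_eq_mul, mul_comm]
end

section
/- Let P be a finite subset of the Euclidean plane ℝ² and r ≥ 0. Then every r-independent subset S of P and every subset S* of P satisfying the r-coverage condition on P satisfy |S| ≤ 5 · |S*|. In particular, in the Euclidean plane any r-DisC diverse subset of P is at most 5 times larger than a minimum r-DisC diverse subset of P. -/
open Real

/-- Combinatorial: no 6 reals with pairwise gaps in (c, 5c). -/
lemma gaps_lemma (A : Finset ℝ) (c : ℝ)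
    (h : ∀ x ∈ A, ∀ y ∈ A, x ≠ y → c < |x - y| ∧ |x - y| < 5 * c) :
    A.card ≤ 5 := by
  by_contra hlt
  push_neg at hlt
  obtain ⟨B, hBA, hB⟩ := Finset.exists_subset_card_eq (show 6 ≤ A.card from hlt)
  set g : Fin 6 → ℝ := fun i => ((B.orderIsoOfFin hB) i : ℝ) with hg
  have hmono : StrictMono g := fun i j hij => (B.orderIsoOfFin hB).strictMono hij
  have hmem : ∀ i, g i ∈ A := fun i => hBA ((B.orderIsoOfFin hB) i).2
  have step : ∀ i j : Fin 6, i < j → g j - g i > c := by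
    intro i j hij
    have hne : g i ≠ g j := (hmono hij).ne
    have := (h _ (hmem i) _ (hmem j) hne).1
    have hlt' : g i < g j := hmono hij
    rw [abs_sub_comm, abs_of_pos (by linarith)] at this
    linarith
  have h01 := step 0 1 (by decide)
  have h12 := step 1 2 (by decide)
  have h23 := step 2 3 (by decide)
  have h34 := step 3 4 (by decide)
  have h45 := step 4 5 (by decide)
  have h05 : g 0 < g 5 := hmono (by decide : (0:Fin 6) < 5)
  have hne : g 0 ≠ g 5 := h05.ne
  have hbig := (h _ (hmem 0) _ (hmem 5) hne).2
  rw [abs_sub_comm, abs_of_pos (by linarith : (0:ℝ) < g 5 - g 0)] at hbig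
  linarith

/-- Cosine bound. -/
lemma cos_bound {w w' : ℂ} {r : ℝ} (hw : w ≠ 0) (hw' : w' ≠ 0)
    (h1 : ‖w‖ ≤ r) (h2 : ‖w'‖ ≤ r)
    (h3 : ‖w - w'‖ > r) (hr : 0 ≤ r) :
    Real.cos (w.arg - w'.arg) < 1 / 2 := by
  set a := ‖w‖ with ha
  set b := ‖w'‖ with hb
  have ha0 : 0 < a := norm_pos_iff.mpr hw
  have hb0 : 0 < b := norm_pos_iff.mpr hw'
  have hcos : Real.cos (w.arg - w'.arg) = (w.re * w'.re + w.im * w'.im) / (a * b) := by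
    rw [Real.cos_sub, Complex.cos_arg hw, Complex.cos_arg hw', Complex.sin_arg, Complex.sin_arg]
    field_simp
    rw [ha, hb]; ring
  have hsq : Complex.normSq (w - w') > r ^ 2 := by
    have : r ^ 2 < ‖w - w'‖ ^ 2 := by nlinarith
    rwa [Complex.sq_norm] at this
  have hnsq : Complex.normSq (w - w') =
      Complex.normSq w + Complex.normSq w' - 2 * (w.re * w'.re + w.im * w'.im) := by
    rw [Complex.normSq_sub]
    congr 1
    rw [Complex.mul_re, Complex.conj_re, Complex.conj_im]
    ring
  have hna : Complex.normSq w = a ^ 2 := (Complex.sq_norm w).symm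
  have hnb : Complex.normSq w' = b ^ 2 := (Complex.sq_norm w').symm
  have key : 2 * (w.re * w'.re + w.im * w'.im) < a * b := by
    rcases le_total a b with hab | hab
    · nlinarith
    · nlinarith
  rw [hcos, div_lt_iff₀ (by positivity)]
  linarith

/-- Packing: at most 5 points of pairwise distance > r within distance r of q. -/
lemma packing (T : Finset ℂ) (q : ℂ) (r : ℝ) (hr : 0 ≤ r)
    (hnear : ∀ t ∈ T, dist t q ≤ r)
    (hfar : ∀ a ∈ T, ∀ b ∈ T, a ≠ b → dist a b > r) :
    T.card ≤ 5 := by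
  by_cases hq : ∃ t ∈ T, t = q
  · obtain ⟨t, ht, rfl⟩ := hq
    have hsub : T ⊆ {t} := by
      intro t' ht'
      by_contra h
      simp only [Finset.mem_singleton] at h
      exact absurd (hnear t' ht') (not_le.mpr (hfar t' ht' t ht h))
    calc T.card ≤ 1 := by simpa using Finset.card_le_card hsub
      _ ≤ 5 := by norm_num
  · push_neg at hq
    have hne : ∀ t ∈ T, t - q ≠ 0 := fun t ht => sub_ne_zero.mpr (hq t ht)
    have hcb : ∀ a ∈ T, ∀ b ∈ T, a ≠ b →
        Real.cos ((a - q).arg - (b - q).arg) < 1 / 2 := by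
      intro a ha b hb hab
      have hd : (a - q) - (b - q) = a - b := by ring
      refine cos_bound (hne a ha) (hne b hb) ?_ ?_ ?_ hr
      · simpa [Complex.dist_eq] using hnear a ha
      · simpa [Complex.dist_eq] using hnear b hb
      · rw [hd]; simpa [Complex.dist_eq] using hfar a ha b hb hab
    set f : ℂ → ℝ := fun t => (t - q).arg with hfdef
    have hinj : Set.InjOn f T := by
      intro a ha b hb hfe
      by_contra hab
      have h := hcb a ha b hb hab
      simp only [hfdef] at hfe
      rw [hfe, sub_self, Real.cos_zero] at h
      norm_num at h
    have hcard : (T.image f).card = T.card := Finset.card_image_of_injOn hinj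
    rw [← hcard]
    apply gaps_lemma _ (π / 3)
    intro x hx y hy hxy
    obtain ⟨a, ha, rfl⟩ := Finset.mem_image.mp hx
    obtain ⟨b, hb, rfl⟩ := Finset.mem_image.mp hy
    have hab : a ≠ b := by rintro rfl; exact hxy rfl
    have hc := hcb a ha b hb hab
    have hpi := Real.pi_pos
    have ha1 := Complex.arg_le_pi (a - q)
    have ha2 := Complex.neg_pi_lt_arg (a - q)
    have hb1 := Complex.arg_le_pi (b - q)
    have hb2 := Complex.neg_pi_lt_arg (b - q)
    have hd2 : |f a - f b| < 2 * π := by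
      simp only [hfdef]
      rw [abs_sub_lt_iff]
      constructor <;> linarith
    constructor
    · by_contra hle
      push_neg at hle
      have h1 : Real.cos (π / 3) ≤ Real.cos |f a - f b| :=
        Real.cos_le_cos_of_nonneg_of_le_pi (abs_nonneg _) (by linarith) hle
      rw [Real.cos_abs, Real.cos_pi_div_three] at h1
      simp only [hfdef] at h1
      linarith
    · by_contra hge
      push_neg at hge
      have heq : Real.cos (f a - f b) = Real.cos (2 * π - |f a - f b|) := by
        rw [Real.cos_two_pi_sub, Real.cos_abs]
      have h1 : Real.cos (π / 3) ≤ Real.cos (2 * π - |f a - f b|) :=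
        Real.cos_le_cos_of_nonneg_of_le_pi (by linarith) (by linarith) (by linarith)
      rw [Real.cos_pi_div_three] at h1
      simp only [hfdef] at heq h1
      linarith



/-- In the Euclidean plane, for any finite set `P` and `r ≥ 0`,
every `r`-independent subset `S` of `P` is at most 5 times larger than any
subset `S*` of `P` satisfying the `r`-coverage condition on `P`. In particular,
any `r`-DisC diverse subset of `P` is at most 5 times larger than a minimum
`r`-DisC diverse subset of `P`. -/
theorem disc_size_bound_plane (P : Finset (EuclideanSpace ℝ (Fin 2)))
    (r : ℝ) (hr : 0 ≤ r)
    (S : Finset (EuclideanSpace ℝ (Fin 2))) (hSP : S ⊆ P)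
    (hSind : ∀ a ∈ S, ∀ b ∈ S, a ≠ b → dist a b > r)
    (Sstar : Finset (EuclideanSpace ℝ (Fin 2))) (hSstarP : Sstar ⊆ P)
    (hcov : ∀ p ∈ P, p ∈ Sstar ∨ ∃ q ∈ Sstar, dist p q ≤ r) :
    S.card ≤ 5 * Sstar.card := by
  classical
  set e : EuclideanSpace ℝ (Fin 2) ≃ₗᵢ[ℝ] ℂ :=
    (Complex.isometryOfOrthonormal (EuclideanSpace.basisFun (Fin 2) ℝ)).symm with he
  have hcov' : ∀ s ∈ S, ∃ q ∈ Sstar, dist s q ≤ r := by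
    intro s hs
    rcases hcov s (hSP hs) with h | h
    · exact ⟨s, h, by simp [hr]⟩
    · exact h
  set f : EuclideanSpace ℝ (Fin 2) → EuclideanSpace ℝ (Fin 2) :=
    fun s => if h : ∃ q ∈ Sstar, dist s q ≤ r then h.choose else s with hfdef
  have hf : ∀ s ∈ S, f s ∈ Sstar ∧ dist s (f s) ≤ r := by
    intro s hs
    have h := hcov' s hs
    simp only [hfdef, dif_pos h]
    exact ⟨h.choose_spec.1, h.choose_spec.2⟩
  have himg : S.image f ⊆ Sstar := by
    intro b hb
    obtain ⟨a, ha, rfl⟩ := Finset.mem_image.mp hb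
    exact (hf a ha).1
  have hmain : S.card ≤ 5 * (S.image f).card := by
    apply Finset.card_le_mul_card_image
    intro b hb
    set F := S.filter (fun a => f a = b) with hF
    have : F.card = (F.image (fun x => e x)).card :=
      (Finset.card_image_of_injOn (e.injective.injOn)).symm
    rw [this]
    apply packing _ (e b) r hr
    · intro t ht
      obtain ⟨a, ha, rfl⟩ := Finset.mem_image.mp ht
      rw [e.dist_map]
      have := (hf a (Finset.mem_of_mem_filter a ha)).2
      have hfa : f a = b := (Finset.mem_filter.mp ha).2
      rwa [hfa] at this
    · intro x hx y hy hxy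
      obtain ⟨a, ha, rfl⟩ := Finset.mem_image.mp hx
      obtain ⟨a', ha', rfl⟩ := Finset.mem_image.mp hy
      rw [e.dist_map]
      exact hSind a (Finset.mem_of_mem_filter a ha) a' (Finset.mem_of_mem_filter a' ha')
        (fun h => hxy (by rw [h]))
  calc S.card ≤ 5 * (S.image f).card := hmain
    _ ≤ 5 * Sstar.card := by
        exact Nat.mul_le_mul_left 5 (Finset.card_le_card himg)
end
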